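/- Fix α > 0 and let γ = 1/2. Define u^α : ℝ² × ℝ → ℝ by u^α(x,t) = 2t/α + (x₁²/α)·χ_{{|x₁| > α}} + (x₂²/α)·χ_{{|x₂| > α}}, and σ : ℝ² → ℝ² by σᵢ(x) = clamp(xᵢ/α), i = 1,2, where clamp(s) = max(−1, min(1, s)). Then: (i) u^α(x,t) = u^α(x,0) + (2/α)·t for all x and t, so u^α is a traveling (vertically translating) front with speed 2/α; (ii) for i = 1,2 and |xᵢ| > α the partial derivative ∂u^α/∂xᵢ exists, equals 2xᵢ/α ≠ 0, and σᵢ(x) = sgn(∂u^α/∂xᵢ); (iii) for every t ∈ ℝ and every x with |x₁| ≠ α and |x₂| ≠ α, u^α(·,t) is twice differentiable at x, σ is differentiable at x, and ∂u^α/∂t(x,t) = γ·(∂²u^α/∂x₁² + ∂²u^α/∂x₂²)(x,t) + ∂σ₁/∂x₁(x) + ∂σ₂/∂x₂(x), i.e. u^α solves the regularized anisotropic total variation flow u_t = γΔu + div(sgn u_{x₁}, sgn u_{x₂}) pointwise outside the lines |x₁| = α, |x₂| = α. -/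

import Mathlib

/-- the traveling front u^α(x,t) = 2t/α + (x₁²/α)χ_{|x₁|>α} +
(x₂²/α)χ_{|x₂|>α} for the regularized flow u_t = γΔu + div(sgn u_{x₁}, sgn u_{x₂})
with γ = 1/2 and Cahn–Hoffman field σᵢ(x) = clamp(xᵢ/α): (i) it translates
vertically with speed 2/α; (ii) for |xᵢ| > α, ∂u/∂xᵢ = 2xᵢ/α ≠ 0 and
σᵢ = sgn(∂u/∂xᵢ); (iii) off the lines |x₁| = α, |x₂| = α it is twice
differentiable, σ is differentiable, and u_t = γ(u_{x₁x₁} + u_{x₂x₂}) + div σ. -/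


lemma fgt (α a : ℝ) (h : α < |a|) :
    HasDerivAt (fun y : ℝ => if α < |y| then y^2/α else 0) (2*a/α) a := by
  have hset : IsOpen {y : ℝ | α < |y|} := isOpen_lt continuous_const continuous_abs
  have h0 : HasDerivAt (fun y : ℝ => y^2/α) (2*a/α) a := by
    have := (hasDerivAt_pow 2 a).div_const α
    simpa [mul_comm] using this
  refine h0.congr_of_eventuallyEq ?_
  filter_upwards [hset.mem_nhds h] with y hy
  rw [if_pos hy]

lemma flt (α a : ℝ) (h : |a| < α) :
    HasDerivAt (fun y : ℝ => if α < |y| then y^2/α else 0) 0 a := by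
  have hset : IsOpen {y : ℝ | |y| < α} := isOpen_lt continuous_abs continuous_const
  refine (hasDerivAt_const a (0:ℝ)).congr_of_eventuallyEq ?_
  filter_upwards [hset.mem_nhds h] with y hy
  rw [if_neg (not_lt.mpr hy.le)]

lemma clt (α a : ℝ) (hα : 0 < α) (h : |a| < α) :
    HasDerivAt (fun y : ℝ => max (-1) (min 1 (y/α))) (1/α) a := by
  have hset : IsOpen {y : ℝ | |y| < α} := isOpen_lt continuous_abs continuous_const
  have h0 : HasDerivAt (fun y : ℝ => y/α) (1/α) a := (hasDerivAt_id a).div_const α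
  refine h0.congr_of_eventuallyEq ?_
  filter_upwards [hset.mem_nhds h] with y hy
  simp only [Set.mem_setOf_eq, abs_lt] at hy
  have h1 : y/α < 1 := (div_lt_one hα).mpr hy.2
  have h2 : -1 < y/α := by rw [lt_div_iff₀ hα]; linarith [hy.1]
  rw [min_eq_right h1.le, max_eq_right h2.le]

lemma cgt (α a : ℝ) (hα : 0 < α) (h : α < |a|) :
    HasDerivAt (fun y : ℝ => max (-1) (min 1 (y/α))) 0 a := by
  rcases lt_abs.mp h with h' | h'
  · have hset : IsOpen {y : ℝ | α < y} := isOpen_lt continuous_const continuous_id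
    refine (hasDerivAt_const a (1:ℝ)).congr_of_eventuallyEq ?_
    filter_upwards [hset.mem_nhds h'] with y hy
    have h1 : 1 < y/α := (one_lt_div hα).mpr hy
    rw [min_eq_left h1.le, max_eq_right (by linarith : (-1:ℝ) ≤ 1)]
  · have h'' : a < -α := by linarith
    have hset : IsOpen {y : ℝ | y < -α} := isOpen_lt continuous_id continuous_const
    refine (hasDerivAt_const a (-1:ℝ)).congr_of_eventuallyEq ?_
    filter_upwards [hset.mem_nhds h''] with y hy
    have h1 : y/α < -1 := by rw [div_lt_iff₀ hα]; linarith
    rw [min_eq_right (by linarith : y/α ≤ 1), max_eq_left h1.le]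

theorem stmt10 (α : ℝ) (hα : 0 < α) (γ : ℝ) (hγ : γ = 1/2)
    (clamp : ℝ → ℝ)
    (hclamp : ∀ s : ℝ, clamp s = max (-1) (min 1 s))
    (u : ℝ × ℝ → ℝ → ℝ)
    (hu : ∀ (x : ℝ × ℝ) (t : ℝ), u x t =
      2 * t / α + (if α < |x.1| then x.1^2 / α else 0)
        + (if α < |x.2| then x.2^2 / α else 0))
    (σ : ℝ × ℝ → ℝ × ℝ)
    (hσ : ∀ x : ℝ × ℝ, σ x = (clamp (x.1 / α), clamp (x.2 / α))) :
    -- (i) traveling (vertically translating) front with speed 2/α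
    (∀ (x : ℝ × ℝ) (t : ℝ), u x t = u x 0 + (2 / α) * t)
    -- (ii) outside the strips, σᵢ = sgn of the nonzero partial derivative
    ∧ (∀ (x : ℝ × ℝ) (t : ℝ),
        (α < |x.1| →
          HasDerivAt (fun y : ℝ => u (y, x.2) t) (2 * x.1 / α) x.1
          ∧ 2 * x.1 / α ≠ 0 ∧ (σ x).1 = Real.sign (2 * x.1 / α))
        ∧ (α < |x.2| →
          HasDerivAt (fun y : ℝ => u (x.1, y) t) (2 * x.2 / α) x.2
          ∧ 2 * x.2 / α ≠ 0 ∧ (σ x).2 = Real.sign (2 * x.2 / α)))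
    -- (iii) the PDE u_t = γΔu + div σ off the lines |x₁| = α, |x₂| = α
    ∧ (∀ (t : ℝ) (x : ℝ × ℝ), |x.1| ≠ α → |x.2| ≠ α →
        ∃ (p₁ p₂ : ℝ → ℝ) (q₁ q₂ d₁ d₂ : ℝ),
          (∀ᶠ y in nhds x.1, HasDerivAt (fun z : ℝ => u (z, x.2) t) (p₁ y) y)
          ∧ (∀ᶠ y in nhds x.2, HasDerivAt (fun z : ℝ => u (x.1, z) t) (p₂ y) y)
          ∧ HasDerivAt p₁ q₁ x.1
          ∧ HasDerivAt p₂ q₂ x.2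
          ∧ HasDerivAt (fun y : ℝ => (σ (y, x.2)).1) d₁ x.1
          ∧ HasDerivAt (fun y : ℝ => (σ (x.1, y)).2) d₂ x.2
          ∧ HasDerivAt (fun s : ℝ => u x s) (γ * (q₁ + q₂) + d₁ + d₂) t) := by
  have hu1 : ∀ (x₂ t : ℝ), (fun y : ℝ => u (y, x₂) t)
      = fun y => 2*t/α + (if α < |y| then y^2/α else 0)
        + (if α < |x₂| then x₂^2/α else 0) := by
    intro x₂ t; funext y; exact hu (y, x₂) t
  have hu2 : ∀ (x₁ t : ℝ), (fun y : ℝ => u (x₁, y) t)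
      = fun y => 2*t/α + (if α < |x₁| then x₁^2/α else 0)
        + (if α < |y| then y^2/α else 0) := by
    intro x₁ t; funext y; exact hu (x₁, y) t
  have hσ1 : ∀ x₂ : ℝ, (fun y : ℝ => (σ (y, x₂)).1)
      = fun y => max (-1) (min 1 (y/α)) := by
    intro x₂; funext y; rw [hσ (y, x₂)]; exact hclamp _
  have hσ2 : ∀ x₁ : ℝ, (fun y : ℝ => (σ (x₁, y)).2)
      = fun y => max (-1) (min 1 (y/α)) := by
    intro x₁; funext y; rw [hσ (x₁, y)]; exact hclamp _
  refine ⟨fun x t => by rw [hu, hu]; ring, fun x t => ⟨fun h1 => ?_, fun h2 => ?_⟩,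
    fun t x h1 h2 => ?_⟩
  · refine ⟨?_, ?_, ?_⟩
    · rw [hu1]
      simpa using (((hasDerivAt_const x.1 (2*t/α)).add (fgt α x.1 h1)).add_const (if α < |x.2| then x.2^2/α else 0))
    · have : (0:ℝ) < |x.1| := lt_trans hα h1
      have hx : x.1 ≠ 0 := by simpa [abs_pos] using this
      exact div_ne_zero (mul_ne_zero two_ne_zero hx) hα.ne'
    · have hs : (σ x).1 = clamp (x.1/α) := by rw [hσ]
      rw [hs]
      rcases lt_abs.mp h1 with h' | h'
      · have hp : 0 < 2 * x.1 / α := div_pos (by linarith) hα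
        rw [Real.sign_of_pos hp, hclamp]
        have : 1 < x.1/α := (one_lt_div hα).mpr h'
        rw [min_eq_left this.le, max_eq_right (by linarith : (-1:ℝ) ≤ 1)]
      · have hx : x.1 < -α := by linarith
        have hn : 2 * x.1 / α < 0 := by
          apply div_neg_of_neg_of_pos _ hα; linarith
        rw [Real.sign_of_neg hn, hclamp]
        have : x.1/α < -1 := by rw [div_lt_iff₀ hα]; linarith
        rw [min_eq_right (by linarith : x.1/α ≤ 1), max_eq_left this.le]
  · refine ⟨?_, ?_, ?_⟩
    · rw [hu2]
      simpa [Pi.add_def] using (((hasDerivAt_const x.2 (2*t/α)).add_const (if α < |x.1| then x.1^2/α else 0)).add (fgt α x.2 h2))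
    · have : (0:ℝ) < |x.2| := lt_trans hα h2
      have hx : x.2 ≠ 0 := by simpa [abs_pos] using this
      exact div_ne_zero (mul_ne_zero two_ne_zero hx) hα.ne'
    · have hs : (σ x).2 = clamp (x.2/α) := by rw [hσ]
      rw [hs]
      rcases lt_abs.mp h2 with h' | h'
      · have hp : 0 < 2 * x.2 / α := div_pos (by linarith) hα
        rw [Real.sign_of_pos hp, hclamp]
        have : 1 < x.2/α := (one_lt_div hα).mpr h'
        rw [min_eq_left this.le, max_eq_right (by linarith : (-1:ℝ) ≤ 1)]
      · have hx : x.2 < -α := by linarith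
        have hn : 2 * x.2 / α < 0 := by
          apply div_neg_of_neg_of_pos _ hα; linarith
        rw [Real.sign_of_neg hn, hclamp]
        have : x.2/α < -1 := by rw [div_lt_iff₀ hα]; linarith
        rw [min_eq_right (by linarith : x.2/α ≤ 1), max_eq_left this.le]
  · refine ⟨(fun y => if α < |x.1| then 2*y/α else 0),
      (fun y => if α < |x.2| then 2*y/α else 0),
      (if α < |x.1| then 2/α else 0), (if α < |x.2| then 2/α else 0),
      (if α < |x.1| then 0 else 1/α), (if α < |x.2| then 0 else 1/α),
      ?_, ?_, ?_, ?_, ?_, ?_, ?_⟩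
    · rcases h1.lt_or_gt with h | h
      · -- |x.1| < α
        have hset : IsOpen {y : ℝ | |y| < α} := isOpen_lt continuous_abs continuous_const
        filter_upwards [hset.mem_nhds h] with y hy
        rw [if_neg (not_lt.mpr h.le), hu1]
        simpa using (((hasDerivAt_const y (2*t/α)).add (flt α y hy)).add_const (if α < |x.2| then x.2^2/α else 0))
      · have hset : IsOpen {y : ℝ | α < |y|} := isOpen_lt continuous_const continuous_abs
        filter_upwards [hset.mem_nhds h] with y hy
        rw [if_pos h, hu1]
        simpa using (((hasDerivAt_const y (2*t/α)).add (fgt α y hy)).add_const (if α < |x.2| then x.2^2/α else 0))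
    · rcases h2.lt_or_gt with h | h
      · have hset : IsOpen {y : ℝ | |y| < α} := isOpen_lt continuous_abs continuous_const
        filter_upwards [hset.mem_nhds h] with y hy
        rw [if_neg (not_lt.mpr h.le), hu2]
        simpa [Pi.add_def] using (((hasDerivAt_const y (2*t/α)).add_const (if α < |x.1| then x.1^2/α else 0)).add (flt α y hy))
      · have hset : IsOpen {y : ℝ | α < |y|} := isOpen_lt continuous_const continuous_abs
        filter_upwards [hset.mem_nhds h] with y hy
        rw [if_pos h, hu2]
        simpa [Pi.add_def] using (((hasDerivAt_const _ (2*t/α)).add_const (if α < |x.1| then x.1^2/α else 0)).add (fgt α _ hy))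
    · split_ifs with h
      · simpa using ((hasDerivAt_id x.1).const_mul 2).div_const α
      · exact hasDerivAt_const _ _
    · split_ifs with h
      · simpa using ((hasDerivAt_id x.2).const_mul 2).div_const α
      · exact hasDerivAt_const _ _
    · rw [hσ1]
      split_ifs with h
      · exact cgt α x.1 hα h
      · exact clt α x.1 hα (lt_of_le_of_ne (not_lt.mp h) h1)
    · rw [hσ2]
      split_ifs with h
      · exact cgt α x.2 hα h
      · exact clt α x.2 hα (lt_of_le_of_ne (not_lt.mp h) h2)
    · have hbase : HasDerivAt (fun s : ℝ => u x s) (2/α) t := by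
        have h0 : (fun s : ℝ => u x s) = fun s => 2*s/α
            + ((if α < |x.1| then x.1^2/α else 0) + (if α < |x.2| then x.2^2/α else 0)) := by
          funext s; rw [hu]; ring
        rw [h0]
        have := (((hasDerivAt_id t).const_mul 2).div_const α).add_const
          ((if α < |x.1| then x.1^2/α else 0) + (if α < |x.2| then x.2^2/α else 0))
        simpa using this
      convert hbase using 1
      subst hγ
      split_ifs <;> field_simp <;> ring
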